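/- If G is a purely non-abelian finite p-group (G has no nontrivial abelian direct factor), then Ω₁(Z(G)) ≤ Φ(G), i.e., every central element of order dividing p lies in the Frattini subgroup. -/

import Mathlib

open Subgroup

/-- If `G` is a purely non-abelian finite `p`-group (no nontrivial abelian direct
factor), then `Ω₁(Z(G)) ≤ Φ(G)`: every central element of order dividing `p` lies
in the Frattini subgroup. -/
theorem omega1_center_le_frattini {G : Type*} [Group G] [Finite G]
    (p : ℕ) (hp : p.Prime) (hG : IsPGroup p G)
    (hpna : ¬ ∃ A N : Subgroup G, A ≠ ⊥ ∧ (∀ a ∈ A, ∀ b ∈ A, a * b = b * a) ∧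
      N.Normal ∧ Disjoint A N ∧ A ⊔ N = ⊤ ∧ ∀ a ∈ A, ∀ n ∈ N, a * n = n * a) :
    ∀ z ∈ Subgroup.center G, z ^ p = 1 → z ∈ frattini G := by
  intro z hz hzp
  by_cases hz1 : z = 1
  · exact hz1 ▸ (frattini G).one_mem
  have : Fact p.Prime := ⟨hp⟩
  have hord : orderOf z = p := orderOf_eq_prime hzp hz1
  suffices h : ∀ M : Subgroup G, IsCoatom M → z ∈ M by
    rw [frattini, Order.radical]
    exact Subgroup.mem_iInf.mpr fun M => Subgroup.mem_iInf.mpr (h M)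
  intro M hM
  by_contra hzM
  apply hpna
  have hsup : zpowers z ⊔ M = ⊤ := by
    rw [sup_comm]
    refine hM.2 (M ⊔ zpowers z) (lt_of_le_of_ne le_sup_left fun h => hzM ?_)
    rw [h]
    exact Subgroup.mem_sup_right (mem_zpowers z)
  haveI hnz : (zpowers z).Normal := by
    constructor
    rintro x ⟨i, rfl⟩ g
    have : g * z ^ i = z ^ i * g := ((Subgroup.zpow_mem _ hz i).comm g).symm
    rw [this]
    simp [mem_zpowers_iff.mpr ⟨i, rfl⟩]
  have hdisj : Disjoint (zpowers z) M := by
    rw [disjoint_iff, eq_bot_iff]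
    rintro x ⟨hx1, hx2⟩
    by_contra hxne
    simp only [Subgroup.mem_bot] at hxne
    obtain ⟨n, rfl⟩ := mem_powers_iff_mem_zpowers.mpr hx1
    have hpn : ¬ p ∣ n := fun hdvd => hxne (orderOf_dvd_iff_pow_eq_one.mp (hord ▸ hdvd))
    have hcop : Nat.Coprime n p := Nat.coprime_comm.mp (hp.coprime_iff_not_dvd.mpr hpn)
    obtain ⟨u, -, hu⟩ := Nat.exists_mul_mod_eq_one_of_coprime hcop hp.one_lt
    have hzeq : z = (z ^ n) ^ u := by
      rw [← pow_mul, ← pow_mod_orderOf, hord, hu, pow_one]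
    exact hzM (hzeq ▸ Subgroup.pow_mem M hx2 u)
  have hMnormal : M.Normal := by
    constructor
    intro m hm g
    have hg : g ∈ ((zpowers z ⊔ M : Subgroup G) : Set G) := by rw [hsup]; trivial
    rw [Subgroup.normal_mul] at hg
    obtain ⟨a, ha, m', hm', rfl⟩ := hg
    obtain ⟨i, rfl⟩ := ha
    have hacen : ∀ x : G, z ^ i * x = x * z ^ i := fun x =>
      (Subgroup.mem_center_iff.mp (Subgroup.zpow_mem _ hz i) x).symm
    have : z ^ i * m' * m * (z ^ i * m')⁻¹ = m' * m * m'⁻¹ := by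
      rw [mul_inv_rev]
      calc z ^ i * m' * m * (m'⁻¹ * (z ^ i)⁻¹)
          = z ^ i * (m' * m * m'⁻¹) * (z ^ i)⁻¹ := by group
        _ = (m' * m * m'⁻¹) * z ^ i * (z ^ i)⁻¹ := by rw [hacen]
        _ = m' * m * m'⁻¹ := by group
    rw [this]
    exact M.mul_mem (M.mul_mem hm' hm) (M.inv_mem hm')
  refine ⟨zpowers z, M, ?_, ?_, hMnormal, hdisj, hsup, ?_⟩
  · intro hbot
    exact hz1 (Subgroup.mem_bot.mp (hbot ▸ mem_zpowers z))
  · rintro a ⟨i, rfl⟩ b ⟨j, rfl⟩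
    exact Commute.zpow_zpow_self z i j
  · rintro a ⟨i, rfl⟩ n hn
    exact (Subgroup.mem_center_iff.mp (Subgroup.zpow_mem _ hz i) n).symm
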